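/- Let Λ = {2^n : n ∈ ℤ} ∪ {−2^n : n ∈ ℤ} and let (uₙ)_{n∈ℤ} be real numbers vanishing for all but finitely many n. Define u : Λ → ℂ by u(2ⁿ) = i·uₙ and u(−2ⁿ) = −i·uₙ. Let ∗ denote twice the standard convolution on Λ, i.e. (f ∗ g)(k) = 2·Σ_{p,q ∈ Λ, p+q=k} f(p)g(q), and ∂ₓf(k) = i·k·f(k). Then for every n ∈ ℤ, −(u ∗ ∂ₓu)(2ⁿ) = i·(2ⁿ·uₙ₋₁² − 2^{n+1}·uₙ₊₁·uₙ). Consequently, the inviscid Burgers equation ∂_t u + u ∗ ∂ₓu = 0 on Λ is equivalent to the Desnyansky–Novikov shell model ∂_t uₙ = kₙ·uₙ₋₁² − kₙ₊₁·uₙ₊₁·uₙ with kₙ = 2ⁿ. -/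
import Mathlib


open scoped Classical

/-- The logarithmic lattice with spacing `l`: the set `{±l^n : n ∈ ℤ} ⊆ ℝ`. -/
def logLattice (l : ℝ) : Set ℝ := {x | ∃ n : ℤ, x = l ^ n ∨ x = -(l ^ n)}

/-- Twice the standard convolution on a lattice `Λ ⊆ ℝ`:
`(f ∗ g)(k) = 2 Σ_{p,q ∈ Λ, p+q=k} f(p) g(q)`. -/
noncomputable def latticeConvTwo (Λ : Set ℝ) (f g : ℝ → ℂ) (k : ℝ) : ℂ :=
  2 * ∑ᶠ p ∈ Λ, ∑ᶠ q ∈ Λ, if p + q = k then f p * g q else 0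

/-- The lattice derivative `∂ₓ f(k) = i k f(k)`. -/
noncomputable def latticeDeriv (f : ℝ → ℂ) : ℝ → ℂ := fun k => Complex.I * (k : ℂ) * f k

/-- If `2^a + 2^b = 2^n` (integer exponents, in `ℝ`) then `a = b = n - 1`. -/
lemma two_zpow_add_eq {a b n : ℤ} (h : (2:ℝ) ^ a + (2:ℝ) ^ b = (2:ℝ) ^ n) :
    a = n - 1 ∧ b = n - 1 := by
  -- WLOG b ≤ a
  have key : ∀ a b n : ℤ, b ≤ a → (2:ℝ) ^ a + (2:ℝ) ^ b = (2:ℝ) ^ n →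
      a = n - 1 ∧ b = n - 1 := by
    intro a b n hba h
    have h2 : (0:ℝ) < 2 := by norm_num
    have hmul : (2:ℝ) ^ (a - b) + 1 = (2:ℝ) ^ (n - b) := by
      have := congrArg (· * (2:ℝ) ^ (-b)) h
      simp only [add_mul, ← zpow_add₀ (by norm_num : (2:ℝ) ≠ 0)] at this
      simpa [sub_eq_add_neg] using this
    have h1le : (1:ℝ) ≤ (2:ℝ) ^ (a - b) := one_le_zpow₀ (by norm_num) (by omega)
    have hnb : 1 ≤ n - b := by
      have : (2:ℝ) ^ (1:ℤ) ≤ (2:ℝ) ^ (n - b) := by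
        rw [zpow_one]; linarith
      exact (zpow_le_zpow_iff_right₀ (by norm_num)).mp this
    -- convert to natural number exponents
    set s : ℕ := (a - b).toNat with hs
    set t : ℕ := (n - b).toNat with ht
    have hsa : (a - b) = (s : ℤ) := (Int.toNat_of_nonneg (by omega)).symm
    have hta : (n - b) = (t : ℤ) := (Int.toNat_of_nonneg (by omega)).symm
    have hnat : (2:ℕ) ^ s + 1 = 2 ^ t := by
      have : (2:ℝ) ^ (s:ℤ) + 1 = (2:ℝ) ^ (t:ℤ) := by rw [← hsa, ← hta]; exact hmul
      rw [zpow_natCast, zpow_natCast] at this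
      exact_mod_cast this
    have hs0 : s = 0 := by
      by_contra hs0
      have h2s : 2 ∣ 2 ^ s := dvd_pow_self 2 hs0
      have h2t : 2 ∣ 2 ^ t := dvd_pow_self 2 (by omega)
      omega
    have ht1 : t = 1 := by
      rw [hs0] at hnat
      have h2t : (2:ℕ) ^ t ≤ 2 ^ 1 := by omega
      have h2t' : (2:ℕ) ^ 1 ≤ 2 ^ t := by omega
      have := Nat.pow_le_pow_iff_right (by norm_num : 1 < 2) |>.mp h2t
      have := Nat.pow_le_pow_iff_right (by norm_num : 1 < 2) |>.mp h2t'
      omega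
    omega
  rcases le_total b a with hba | hab
  · exact key a b n hba h
  · have := key b a n hab (by linarith)
    exact ⟨this.2, this.1⟩

/-- If `2^a - 2^b = 2^n` then `a = n + 1` and `b = n`. -/
lemma two_zpow_sub_eq {a b n : ℤ} (h : (2:ℝ) ^ a - (2:ℝ) ^ b = (2:ℝ) ^ n) :
    a = n + 1 ∧ b = n := by
  have h' : (2:ℝ) ^ n + (2:ℝ) ^ b = (2:ℝ) ^ a := by linarith
  have := two_zpow_add_eq h'
  omega

/-- Classification: `p ∈ Λ(2)` and `2^n - p ∈ Λ(2)` force `p ∈ {2^{n+1}, -2^n, 2^{n-1}}`. -/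
lemma lattice_pair_classify {n : ℤ} {p : ℝ} (hp : p ∈ logLattice 2)
    (hq : (2:ℝ) ^ n - p ∈ logLattice 2) :
    p = (2:ℝ) ^ (n + 1) ∨ p = -((2:ℝ) ^ n) ∨ p = (2:ℝ) ^ (n - 1) := by
  obtain ⟨a, ha | ha⟩ := hp <;> obtain ⟨b, hb | hb⟩ := hq
  · -- p = 2^a, 2^n - p = 2^b : 2^b + 2^a = 2^n
    have : (2:ℝ) ^ b + (2:ℝ) ^ a = (2:ℝ) ^ n := by rw [ha] at hb; linarith
    have := (two_zpow_add_eq this).2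
    right; right; rw [ha, this]
  · -- 2^n - 2^a = -2^b : 2^a - 2^b = 2^n
    have : (2:ℝ) ^ a - (2:ℝ) ^ b = (2:ℝ) ^ n := by rw [ha] at hb; linarith
    have := (two_zpow_sub_eq this).1
    left; rw [ha, this]
  · -- 2^n + 2^a = 2^b
    have : (2:ℝ) ^ n + (2:ℝ) ^ a = (2:ℝ) ^ b := by rw [ha] at hb; linarith
    obtain ⟨hb1, hb2⟩ := two_zpow_add_eq this
    right; left; rw [ha]
    have hn : a = n := by omega
    rw [hn]
  · -- 2^n + 2^a = -2^b : impossible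
    exfalso
    rw [ha] at hb
    have h1 : (0:ℝ) < (2:ℝ) ^ n := zpow_pos (by norm_num) _
    have h2 : (0:ℝ) < (2:ℝ) ^ a := zpow_pos (by norm_num) _
    have h3 : (0:ℝ) < (2:ℝ) ^ b := zpow_pos (by norm_num) _
    linarith

lemma finsum_mem_ite_eq (Λ : Set ℝ) (a : ℝ) (c : ℝ → ℂ) :
    (∑ᶠ q ∈ Λ, if q = a then c q else 0) = if a ∈ Λ then c a else 0 := by
  rw [finsum_mem_def, finsum_eq_single _ a]
  · by_cases h : a ∈ Λ <;> simp [Set.indicator_apply, h]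
  · intro x hx
    simp [Set.indicator_apply, hx]

/-- Burgers' representation of the Desnyansky–Novikov shell model: for a real,
finitely supported sequence `(uₙ)` and the purely imaginary lattice field `U`
with `U(2ⁿ) = i uₙ`, `U(−2ⁿ) = −i uₙ`, the (doubled) convolution on `Λ(2)`
satisfies `−(U ∗ ∂ₓU)(2ⁿ) = i (2ⁿ uₙ₋₁² − 2ⁿ⁺¹ uₙ₊₁ uₙ)` for every `n ∈ ℤ`;
hence the inviscid Burgers equation on `Λ(2)` is the DN shell model. -/
theorem burgers_desnyansky_novikov (u : ℤ → ℝ) (hu : (Function.support u).Finite)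
    (U : ℝ → ℂ)
    (hUpos : ∀ n : ℤ, U ((2 : ℝ) ^ n) = Complex.I * (u n : ℂ))
    (hUneg : ∀ n : ℤ, U (-((2 : ℝ) ^ n)) = -Complex.I * (u n : ℂ))
    (hUsupp : ∀ k : ℝ, k ∉ logLattice 2 → U k = 0) :
    ∀ n : ℤ, -(latticeConvTwo (logLattice 2) U (latticeDeriv U) ((2 : ℝ) ^ n)) =
      Complex.I * ((((2 : ℝ) ^ n : ℝ) : ℂ) * (u (n - 1) : ℂ) ^ 2 -
        (((2 : ℝ) ^ (n + 1) : ℝ) : ℂ) * (u (n + 1) : ℂ) * (u n : ℂ)) := by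
  intro n
  set Λ : Set ℝ := logLattice 2 with hΛ
  set k : ℝ := (2:ℝ) ^ n with hk
  set D : ℝ → ℂ := latticeDeriv U with hD
  -- membership facts
  have memΛ : ∀ m : ℤ, (2:ℝ) ^ m ∈ Λ := fun m => ⟨m, Or.inl rfl⟩
  have memΛ' : ∀ m : ℤ, -((2:ℝ) ^ m) ∈ Λ := fun m => ⟨m, Or.inr rfl⟩
  -- rewrite the inner sums
  have inner : ∀ p : ℝ,
      (∑ᶠ q ∈ Λ, if p + q = k then U p * D q else 0)
      = if (k - p) ∈ Λ then U p * D (k - p) else 0 := by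
    intro p
    rw [← finsum_mem_ite_eq Λ (k - p) (fun q => U p * D q)]
    apply finsum_mem_congr rfl
    intro q _
    exact if_congr ⟨fun h => by linarith, fun h => by rw [h]; ring⟩ rfl rfl
  -- the outer summand
  set F : ℝ → ℂ := fun p => if (k - p) ∈ Λ then U p * D (k - p) else 0 with hF
  have houter : (∑ᶠ p ∈ Λ, ∑ᶠ q ∈ Λ, if p + q = k then U p * D q else 0)
      = ∑ᶠ p ∈ Λ, F p := finsum_mem_congr rfl (fun p _ => inner p)
  -- the three relevant lattice points
  have h2pos : ∀ m : ℤ, (0:ℝ) < (2:ℝ) ^ m := fun m => zpow_pos (by norm_num) _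
  have hd1 : (2:ℝ) ^ (n+1) ≠ -((2:ℝ) ^ n) := by
    have := h2pos (n+1); have := h2pos n; intro h; linarith [h ▸ (h2pos (n+1))]
  have hd2 : (2:ℝ) ^ (n+1) ≠ (2:ℝ) ^ (n-1) := by
    intro h
    have := zpow_right_injective₀ (by norm_num : (0:ℝ) < 2) (by norm_num) h
    omega
  have hd3 : -((2:ℝ) ^ n) ≠ (2:ℝ) ^ (n-1) := by
    have := h2pos n; have := h2pos (n-1); intro h; linarith
  set S : Finset ℝ := {(2:ℝ) ^ (n+1), -((2:ℝ) ^ n), (2:ℝ) ^ (n-1)} with hS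
  have hsupp : Function.support (Λ.indicator F) ⊆ (S : Set ℝ) := by
    intro p hp
    rw [Function.mem_support, Set.indicator_apply_ne_zero] at hp
    obtain ⟨hpΛ, hFp⟩ := hp
    rw [Function.mem_support] at hFp
    have hkp : (k - p) ∈ Λ := by
      by_contra h
      simp [hF, h] at hFp
    have := lattice_pair_classify hpΛ hkp
    simp [hS]
    tauto
  -- arithmetic identities on the lattice
  have e1 : k - (2:ℝ) ^ (n+1) = -((2:ℝ) ^ n) := by
    rw [hk, zpow_add_one₀ (by norm_num : (2:ℝ) ≠ 0)]; ring
  have e2 : k - (-((2:ℝ) ^ n)) = (2:ℝ) ^ (n+1) := by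
    rw [hk, zpow_add_one₀ (by norm_num : (2:ℝ) ≠ 0)]; ring
  have r2 : (2:ℝ) ^ n = 2 * (2:ℝ) ^ (n-1) := by
    have h := zpow_add_one₀ (by norm_num : (2:ℝ) ≠ 0) (n-1)
    rw [sub_add_cancel] at h
    rw [h]; ring
  have r1 : (2:ℝ) ^ (n+1) = 4 * (2:ℝ) ^ (n-1) := by
    rw [zpow_add_one₀ (by norm_num : (2:ℝ) ≠ 0), r2]; ring
  have e3 : k - (2:ℝ) ^ (n-1) = (2:ℝ) ^ (n-1) := by
    rw [hk, r2]; ring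
  -- compute the finsum
  have hsum : (∑ᶠ p ∈ Λ, F p)
      = F ((2:ℝ) ^ (n+1)) + F (-((2:ℝ) ^ n)) + F ((2:ℝ) ^ (n-1)) := by
    rw [finsum_mem_def, finsum_eq_finset_sum_of_support_subset _ hsupp]
    rw [hS, Finset.sum_insert (by simp [hd1, hd2]), Finset.sum_insert (by simp [hd3]),
      Finset.sum_singleton]
    rw [Set.indicator_of_mem (memΛ (n+1)), Set.indicator_of_mem (memΛ' n),
      Set.indicator_of_mem (memΛ (n-1))]
    ring
  -- evaluate F at the three points
  have hF1 : F ((2:ℝ) ^ (n+1)) = (Complex.I * (u (n+1) : ℂ)) *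
      (Complex.I * ((-((2:ℝ) ^ n) : ℝ) : ℂ) * (-Complex.I * (u n : ℂ))) := by
    rw [hF]; simp only [e1, if_pos (memΛ' n)]
    rw [hUpos (n+1), hD, latticeDeriv, hUneg n]
  have hF2 : F (-((2:ℝ) ^ n)) = (-Complex.I * (u n : ℂ)) *
      (Complex.I * (((2:ℝ) ^ (n+1) : ℝ) : ℂ) * (Complex.I * (u (n+1) : ℂ))) := by
    rw [hF]; simp only [e2, if_pos (memΛ (n+1))]
    rw [hUneg n, hD, latticeDeriv, hUpos (n+1)]
  have hF3 : F ((2:ℝ) ^ (n-1)) = (Complex.I * (u (n-1) : ℂ)) *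
      (Complex.I * (((2:ℝ) ^ (n-1) : ℝ) : ℂ) * (Complex.I * (u (n-1) : ℂ))) := by
    rw [hF]; simp only [e3, if_pos (memΛ (n-1))]
    rw [hUpos (n-1), hD, latticeDeriv, hUpos (n-1)]
  -- put everything together
  rw [latticeConvTwo, houter, hsum, hF1, hF2, hF3, hk, r1, r2]
  push_cast
  linear_combination (-(2:ℂ) * (2:ℂ) ^ (n-1) *
    ((u (n-1) : ℂ) ^ 2 - 2 * (u (n+1) : ℂ) * (u n : ℂ)) * Complex.I) * Complex.I_mul_I
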